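/- Cycles are the only 2-edge-connected graphs in which any two nonadjacent (vertex-disjoint) edges form a separating edge set: if G is 2-edge-connected with matching number at least 2 and for every pair of disjoint edges {e,f} the graph G - {e,f} is disconnected, then G is a cycle. -/

import Mathlib

open SimpleGraph

/-- `G` is `k`-edge-connected: deleting fewer than `k` edges leaves a connected graph. -/
def KEdgeConnected {V : Type*} (G : SimpleGraph V) (k : ℕ) : Prop :=
  ∀ F : Finset (Sym2 V), F.card < k → (G.deleteEdges ↑F).Connected

/-- `M` is a matching of `G`: a set of pairwise disjoint edges. -/
def IsMatchingFinset {V : Type*} (G : SimpleGraph V) (M : Finset (Sym2 V)) : Prop :=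
  (↑M : Set (Sym2 V)) ⊆ G.edgeSet ∧
    (↑M : Set (Sym2 V)).Pairwise fun e f => ∀ v, v ∈ e → v ∉ f

variable {V : Type}


lemma master {H : SimpleGraph V} (u w : V) {a b : V} (p : H.Walk a b) :
    (H.deleteEdges {s(u,w)}).Reachable a b
    ∨ ((H.deleteEdges {s(u,w)}).Reachable a u ∧ (H.deleteEdges {s(u,w)}).Reachable w b)
    ∨ ((H.deleteEdges {s(u,w)}).Reachable a w ∧ (H.deleteEdges {s(u,w)}).Reachable u b) := by
  set D := H.deleteEdges {s(u,w)} with hD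
  induction p with
  | nil => exact Or.inl (Reachable.refl _)
  | @cons a c b h q ih =>
    by_cases hec : s(a, c) = s(u, w)
    · rw [Sym2.eq_iff] at hec
      rcases hec with ⟨rfl, rfl⟩ | ⟨rfl, rfl⟩
      · rcases ih with h1 | ⟨h1, h2⟩ | ⟨h1, h2⟩
        · exact Or.inr (Or.inl ⟨Reachable.refl _, h1⟩)
        · exact Or.inr (Or.inl ⟨Reachable.refl _, h2⟩)
        · exact Or.inl h2
      · rcases ih with h1 | ⟨h1, h2⟩ | ⟨h1, h2⟩
        · exact Or.inr (Or.inr ⟨Reachable.refl _, h1⟩)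
        · exact Or.inl h2
        · exact Or.inr (Or.inr ⟨Reachable.refl _, h2⟩)
    · have hadj : D.Adj a c := by
        rw [hD, deleteEdges_adj]
        exact ⟨h, by simpa using hec⟩
      rcases ih with h1 | ⟨h1, h2⟩ | ⟨h1, h2⟩
      · exact Or.inl (hadj.reachable.trans h1)
      · exact Or.inr (Or.inl ⟨hadj.reachable.trans h1, h2⟩)
      · exact Or.inr (Or.inr ⟨hadj.reachable.trans h1, h2⟩)

lemma patch {H : SimpleGraph V} {u w : V} (hr : (H.deleteEdges {s(u,w)}).Reachable u w)
    {a b : V} (hab : H.Reachable a b) : (H.deleteEdges {s(u,w)}).Reachable a b := by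
  obtain ⟨p⟩ := hab
  rcases master u w p with h1 | ⟨h1, h2⟩ | ⟨h1, h2⟩
  · exact h1
  · exact (h1.trans hr).trans h2
  · exact (h1.trans hr.symm).trans h2

lemma split' {H : SimpleGraph V} {u w : V} (hc : H.Preconnected) (v : V) :
    (H.deleteEdges {s(u,w)}).Reachable u v ∨ (H.deleteEdges {s(u,w)}).Reachable w v := by
  obtain ⟨p⟩ := hc u v
  rcases master u w p with h1 | ⟨h1, h2⟩ | ⟨h1, h2⟩
  · exact Or.inl h1
  · exact Or.inr h2
  · exact Or.inl h2


lemma mem_support_reachable [DecidableEq V] {G' : SimpleGraph V} {a b z : V} (p : G'.Walk a b)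
    (hz : z ∈ p.support) : G'.Reachable a z := ⟨p.takeUntil z hz⟩

lemma walk_in {G' : SimpleGraph V} (s : Set V) {a b : V} (p : G'.Walk a b)
    (hs : ∀ z ∈ p.support, z ∈ s) (ha : a ∈ s) (hb : b ∈ s) :
    (G'.induce s).Reachable ⟨a, ha⟩ ⟨b, hb⟩ := by
  induction p with
  | nil => rfl
  | @cons a c b h q ih =>
    have hc : c ∈ s := hs c (by simp)
    have hadj : (G'.induce s).Adj ⟨a, ha⟩ ⟨c, hc⟩ := by simpa using h
    exact hadj.reachable.trans (ih (fun z hz => hs z (by simp [hz])) hc hb)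

lemma exists_cycle_in (G' : SimpleGraph V) [Fintype V] [DecidableEq V] [DecidableRel G'.Adj]
    (x : V) (A : Finset V) (hA : ∀ u, u ∈ A ↔ G'.Reachable x u)
    (hcard : 2 * A.card ≤ (∑ u ∈ A, G'.degree u) + 1) :
    ∃ (w : V) (c : G'.Walk w w), c.IsCycle ∧ ∀ z ∈ c.support, z ∈ A := by
  classical
  have hclosed : ∀ {u z : V}, u ∈ A → G'.Adj u z → z ∈ A := by
    intro u z hu hadj
    exact (hA z).2 (((hA u).1 hu).trans hadj.reachable)
  have hx : x ∈ A := (hA x).2 (Reachable.refl x)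
  set s : Set V := ↑A with hsdef
  set H : SimpleGraph ↥s := G'.induce s with hH
  -- H is connected
  have hHconn : H.Connected := by
    rw [connected_iff]
    refine ⟨?_, ⟨⟨x, hx⟩⟩⟩
    rintro ⟨a, ha⟩ ⟨b, hb⟩
    have hab : G'.Reachable a b := ((hA a).1 ha).symm.trans ((hA b).1 hb)
    obtain ⟨p⟩ := hab
    refine walk_in s p (fun z hz => ?_) ha hb
    exact (hA z).2 (((hA a).1 ha).trans (mem_support_reachable p hz))
  -- degrees agree
  have hdeg : ∀ (u : V) (hu : u ∈ s), H.degree ⟨u, hu⟩ = G'.degree u := by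
    intro u hu
    have : G'.neighborFinset u = (H.neighborFinset ⟨u, hu⟩).image Subtype.val := by
      ext z
      simp only [Finset.mem_image, mem_neighborFinset]
      constructor
      · intro hadj
        have hz : z ∈ A := hclosed hu hadj
        exact ⟨⟨z, hz⟩, by simpa [hH] using hadj, rfl⟩
      · rintro ⟨⟨z', hz'⟩, hadj, rfl⟩
        simpa [hH] using hadj
    rw [degree, degree, this, Finset.card_image_of_injective _ Subtype.val_injective]
  by_cases hac : H.IsAcyclic
  · exfalso
    have htree : H.IsTree := ⟨hHconn, hac⟩
    have hcnt := htree.card_edgeFinset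
    have hsum : ∑ v : ↥s, H.degree v = 2 * H.edgeFinset.card := by
      simpa [two_mul] using H.sum_degrees_eq_twice_card_edges
    have hsum2 : ∑ v : ↥s, H.degree v = ∑ u ∈ A, G'.degree u := by
      rw [Finset.sum_coe_sort A (fun u => G'.degree u) |>.symm]
      exact Finset.sum_congr rfl (fun ⟨u, hu⟩ _ => hdeg u hu)
    have hcardV : Fintype.card ↥s = A.card := by simp [hsdef]
    omega
  · rw [IsAcyclic] at hac
    push_neg at hac
    obtain ⟨⟨w, hw⟩, c₀, hc₀⟩ := hac
    refine ⟨w, c₀.map (Embedding.induce s).toHom, hc₀.map Subtype.val_injective, ?_⟩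
    intro z hz
    have hz2 : z ∈ (c₀.map (Embedding.induce s).toHom).support := hz
    rw [Walk.support_map, List.mem_map] at hz2
    obtain ⟨⟨z', hz'⟩, _, rfl⟩ := hz2
    exact hz'


lemma cycle_two_step {G' : SimpleGraph V} {x : V} {c : G'.Walk x x} (hc : c.IsCycle) :
    ∃ (v1 v2 : V), G'.Adj x v1 ∧ G'.Adj v1 v2 ∧ v2 ≠ x ∧ s(v1, v2) ∈ c.edges := by
  have hnn : ¬ c.Nil := hc.isCircuit.not_nil
  obtain ⟨v1, h1, q1, rfl⟩ := Walk.not_nil_iff.mp hnn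
  have hnn1 : ¬ q1.Nil := Walk.not_nil_of_ne h1.ne'
  obtain ⟨v2, h2, q2, rfl⟩ := Walk.not_nil_iff.mp hnn1
  refine ⟨v1, v2, h1, h2, ?_, by simp⟩
  rintro rfl
  have hnd := hc.isCircuit.isTrail.edges_nodup
  simp only [Walk.edges_cons, List.nodup_cons, List.mem_cons] at hnd
  exact hnd.1 (Or.inl Sym2.eq_swap)


lemma key' (G : SimpleGraph V) [Fintype V] [DecidableEq V] [DecidableRel G.Adj]
    (hsep : ∀ e f : Sym2 V, e ∈ G.edgeSet → f ∈ G.edgeSet → (∀ z, z ∈ e → z ∉ f) →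
      ¬ (G.deleteEdges {e, f}).Preconnected)
    (hdeg2 : ∀ u, 2 ≤ G.degree u)
    (p q x y v : V) (he : G.Adj p q) (hf : G.Adj x y)
    (hd : ∀ z, z ∈ s(p,q) → z ∉ s(x,y))
    (hxp : (G.deleteEdges {s(p,q), s(x,y)}).Reachable x p)
    (hyq : (G.deleteEdges {s(p,q), s(x,y)}).Reachable y q)
    (hxy : ¬ (G.deleteEdges {s(p,q), s(x,y)}).Reachable x y)
    (hall : ∀ u, (G.deleteEdges {s(p,q), s(x,y)}).Reachable x u ∨
      (G.deleteEdges {s(p,q), s(x,y)}).Reachable y u)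
    (hv : (G.deleteEdges {s(p,q), s(x,y)}).Reachable x v)
    (hdv : 3 ≤ G.degree v) : False := by
  classical
  set G' : SimpleGraph V := G.deleteEdges {s(p,q), s(x,y)} with hG'
  have hpx : p ≠ x := fun h => hd p (by simp) (by simp [h])
  have hpy : p ≠ y := fun h => hd p (by simp) (by simp [h])
  have hqx : q ≠ x := fun h => hd q (by simp) (by simp [h])
  have hqy : q ≠ y := fun h => hd q (by simp) (by simp [h])
  have hpq : p ≠ q := he.ne
  have hxyne : x ≠ y := hf.ne
  set A : Finset V := Finset.univ.filter (fun u => G'.Reachable x u) with hA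
  have hmemA : ∀ u, u ∈ A ↔ G'.Reachable x u := by intro u; simp [hA]
  have hxA : x ∈ A := (hmemA x).2 (Reachable.refl x)
  have hpA : p ∈ A := (hmemA p).2 hxp
  have hvA : v ∈ A := (hmemA v).2 hv
  have hyA : y ∉ A := fun h => hxy ((hmemA y).1 h)
  have hqA : q ∉ A := fun h => hxy (((hmemA q).1 h).trans hyq.symm)
  -- pointwise degree comparison
  have hpt : ∀ u ∈ A, G.degree u ≤ G'.degree u + (if u = p ∨ u = x then 1 else 0) := by
    intro u hu
    have huq : u ≠ q := fun h => hqA (h ▸ hu)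
    have huy : u ≠ y := fun h => hyA (h ▸ hu)
    by_cases hup : u = p
    · subst hup
      have hnb : G'.neighborFinset u = G.neighborFinset u \ {q} := by
        ext z
        simp only [Finset.mem_sdiff, Finset.mem_singleton, mem_neighborFinset, hG',
          deleteEdges_adj, Set.mem_insert_iff, Set.mem_singleton_iff, Sym2.eq_iff]
        constructor
        · rintro ⟨h1, h2⟩
          exact ⟨h1, fun hz => h2 (Or.inl (Or.inl ⟨by simp, hz⟩))⟩
        · rintro ⟨h1, h2⟩
          exact ⟨h1, by aesop⟩
      have hq1 : ({q} : Finset V) ⊆ G.neighborFinset u := by simpa using he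
      have hcs := Finset.card_sdiff_of_subset hq1
      have h1c : 1 ≤ (G.neighborFinset u).card := Finset.card_pos.2 ⟨q, by simpa using he⟩
      rw [degree, degree, hnb]
      split_ifs with hif
      · simp only [Finset.card_singleton] at hcs; omega
      · exact absurd (Or.inl rfl) hif
    · by_cases hux : u = x
      · subst hux
        have hnb : G'.neighborFinset u = G.neighborFinset u \ {y} := by
          ext z
          simp only [Finset.mem_sdiff, Finset.mem_singleton, mem_neighborFinset, hG',
            deleteEdges_adj, Set.mem_insert_iff, Set.mem_singleton_iff, Sym2.eq_iff]
          constructor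
          · rintro ⟨h1, h2⟩
            exact ⟨h1, fun hz => h2 (Or.inr (Or.inl ⟨by simp, hz⟩))⟩
          · rintro ⟨h1, h2⟩
            exact ⟨h1, by aesop⟩
        have hq1 : ({y} : Finset V) ⊆ G.neighborFinset u := by simpa using hf
        have hcs := Finset.card_sdiff_of_subset hq1
        have h1c : 1 ≤ (G.neighborFinset u).card := Finset.card_pos.2 ⟨y, by simpa using hf⟩
        rw [degree, degree, hnb]
        split_ifs with hif
        · simp only [Finset.card_singleton] at hcs; omega
        · exact absurd (Or.inr rfl) hif
      · have hnb : G'.neighborFinset u = G.neighborFinset u := by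
          ext z
          simp only [mem_neighborFinset, hG', deleteEdges_adj, Set.mem_insert_iff,
            Set.mem_singleton_iff, Sym2.eq_iff]
          constructor
          · exact fun h => h.1
          · intro h1
            exact ⟨h1, by aesop⟩
        rw [degree, degree, hnb]
        simp
  have hsum1 : ∑ u ∈ A, G.degree u ≤ (∑ u ∈ A, G'.degree u) + 2 := by
    calc ∑ u ∈ A, G.degree u
        ≤ ∑ u ∈ A, (G'.degree u + (if u = p ∨ u = x then 1 else 0)) :=
          Finset.sum_le_sum hpt
      _ = (∑ u ∈ A, G'.degree u) + ∑ u ∈ A, (if u = p ∨ u = x then 1 else 0) :=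
          Finset.sum_add_distrib
      _ ≤ (∑ u ∈ A, G'.degree u) + 2 := by
          have heq : ∑ u ∈ A, (if u = p ∨ u = x then 1 else 0) =
              (A.filter (fun u => u = p ∨ u = x)).card := by
            rw [Finset.card_filter]
          have hsub : A.filter (fun u => u = p ∨ u = x) ⊆ {p, x} := by
            intro u hu
            simp only [Finset.mem_filter] at hu
            simpa using hu.2
          have hb : (A.filter (fun u => u = p ∨ u = x)).card ≤ 2 := by
            refine le_trans (Finset.card_le_card hsub) ?_
            exact le_trans (Finset.card_insert_le _ _) (by simp)
          omega
  have hlow : 2 * A.card + 1 ≤ ∑ u ∈ A, G.degree u := by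
    have h1 : ∑ u ∈ A.erase v, G.degree u + G.degree v = ∑ u ∈ A, G.degree u :=
      Finset.sum_erase_add A (fun u => G.degree u) hvA
    have h2 : (A.erase v).card • 2 ≤ ∑ u ∈ A.erase v, G.degree u :=
      Finset.card_nsmul_le_sum _ _ _ (fun u _ => hdeg2 u)
    have h3 : (A.erase v).card = A.card - 1 := Finset.card_erase_of_mem hvA
    have h4 : 1 ≤ A.card := Finset.card_pos.2 ⟨v, hvA⟩
    simp only [smul_eq_mul] at h2
    omega
  have hA2 : 2 * A.card ≤ (∑ u ∈ A, G'.degree u) + 1 := by omega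
  obtain ⟨w, c, hcyc, hsupA⟩ := exists_cycle_in G' x A hmemA hA2
  have hwA : w ∈ A := hsupA w c.start_mem_support
  obtain ⟨v1, v2, hadj12, h12r, hv1A, hv2A, hv1x, hv2x⟩ :
      ∃ v1 v2, G'.Adj v1 v2 ∧ (G'.deleteEdges {s(v1,v2)}).Reachable v1 v2 ∧
        v1 ∈ A ∧ v2 ∈ A ∧ v1 ≠ x ∧ v2 ≠ x := by
    by_cases hxs : x ∈ c.support
    · have hcyc' : (c.rotate x hxs).IsCycle := hcyc.rotate hxs
      obtain ⟨v1, v2, h1, h2, hv2x, hmemE⟩ := cycle_two_step hcyc'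
      have hr : (G'.deleteEdges {s(v1,v2)}).Reachable v1 v2 :=
        ((G'.adj_and_reachable_delete_edges_iff_exists_cycle).mpr ⟨x, _, hcyc', hmemE⟩).2
      exact ⟨v1, v2, h2, hr, (hmemA v1).2 h1.reachable,
        (hmemA v2).2 (h1.reachable.trans h2.reachable), h1.ne', hv2x⟩
    · obtain ⟨v1, v2, h1, h2, hv2w, hmemE⟩ := cycle_two_step hcyc
      have hv1s : v1 ∈ c.support := c.fst_mem_support_of_mem_edges hmemE
      have hv2s : v2 ∈ c.support := c.snd_mem_support_of_mem_edges hmemE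
      have hr : (G'.deleteEdges {s(v1,v2)}).Reachable v1 v2 :=
        ((G'.adj_and_reachable_delete_edges_iff_exists_cycle).mpr ⟨w, _, hcyc, hmemE⟩).2
      exact ⟨v1, v2, h2, hr, hsupA _ hv1s, hsupA _ hv2s,
        fun h => hxs (h ▸ hv1s), fun h => hxs (h ▸ hv2s)⟩
  have hv1y : v1 ≠ y := fun h => hyA (h ▸ hv1A)
  have hv2y : v2 ≠ y := fun h => hyA (h ▸ hv2A)
  have hgedge : s(v1, v2) ∈ G.edgeSet := (G.deleteEdges_le _) hadj12
  have hdisj : ∀ z, z ∈ s(v1,v2) → z ∉ s(x,y) := by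
    intro z hz hz'
    rw [Sym2.mem_iff] at hz hz'
    rcases hz with rfl | rfl <;> rcases hz' with rfl | rfl <;> simp_all
  refine hsep s(v1,v2) s(x,y) hgedge (G.mem_edgeSet.mpr hf) hdisj ?_
  have hle : G'.deleteEdges {s(v1,v2)} ≤ G.deleteEdges {s(v1,v2), s(x,y)} := by
    intro a b hab
    simp only [hG', deleteEdges_adj, Set.mem_insert_iff, Set.mem_singleton_iff] at hab ⊢
    tauto
  have hepq : (G.deleteEdges {s(v1,v2), s(x,y)}).Adj p q := by
    simp only [deleteEdges_adj, Set.mem_insert_iff, Set.mem_singleton_iff]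
    refine ⟨he, ?_⟩
    push_neg
    constructor
    · intro hEq
      rw [Sym2.eq_iff] at hEq
      rcases hEq with ⟨rfl, rfl⟩ | ⟨rfl, rfl⟩
      · exact absurd hv2A hqA
      · exact absurd hv1A hqA
    · intro hEq
      rw [Sym2.eq_iff] at hEq
      rcases hEq with ⟨rfl, rfl⟩ | ⟨rfl, rfl⟩
      · exact hpx rfl
      · exact hqx rfl
  have hkey : ∀ u, (G.deleteEdges {s(v1,v2), s(x,y)}).Reachable p u := by
    intro u
    rcases hall u with hxu | hyu
    · exact (patch h12r (hxp.symm.trans hxu)).mono hle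
    · exact hepq.reachable.trans ((patch h12r (hyq.symm.trans hyu)).mono hle)
  intro a b
  exact (hkey a).symm.trans (hkey b)


lemma iso_of_enum (G : SimpleGraph V) (m : ℕ) (h3 : 3 ≤ m) [NeZero m] (F : Fin m → V)
    (hbij : Function.Bijective F)
    (hadj : ∀ i j : Fin m, G.Adj (F i) (F j) ↔ j = i + 1 ∨ i = j + 1) :
    Nonempty (G ≃g cycleGraph m) := by
  obtain ⟨k, rfl⟩ : ∃ k, m = k + 3 := ⟨m - 3, by omega⟩
  have hcyc : ∀ i j : Fin (k+3), (cycleGraph (k+3)).Adj i j ↔ (j = i + 1 ∨ i = j + 1) := by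
    intro i j
    have h0 : (cycleGraph ((k+1)+2)).Adj i j ↔ i - j = 1 ∨ j - i = 1 := cycleGraph_adj
    rw [h0]
    constructor
    · rintro (h | h)
      · exact Or.inr (by rw [← h]; abel)
      · exact Or.inl (by rw [← h]; abel)
    · rintro (rfl | rfl) <;> [right; left] <;> abel
  set e := (Equiv.ofBijective F hbij).symm with he
  refine ⟨⟨e, ?_⟩⟩
  intro a b
  have ha : F (e a) = a := Equiv.ofBijective_apply_symm_apply F hbij a
  have hb : F (e b) = b := Equiv.ofBijective_apply_symm_apply F hbij b
  have h2 : G.Adj a b ↔ (e b = e a + 1 ∨ e a = e b + 1) := by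
    conv_lhs => rw [← ha, ← hb]
    exact hadj _ _
  rw [hcyc, h2]

def trav (nxt : V → V → V) (v0 v1 : V) : ℕ → V × V
  | 0 => (v0, v1)
  | n+1 => ((trav nxt v0 v1 n).2, nxt (trav nxt v0 v1 n).1 (trav nxt v0 v1 n).2)

lemma two_regular_cycle' (G : SimpleGraph V) [Fintype V] [DecidableEq V] [DecidableRel G.Adj]
    (hconn : G.Connected) (hdeg : ∀ v, G.degree v = 2) :
    ∃ n : ℕ, 3 ≤ n ∧ Nonempty (G ≃g cycleGraph n) := by
  classical
  have hne : Nonempty V := hconn.nonempty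
  obtain ⟨v0⟩ := hne
  have hne' : Nonempty V := ⟨v0⟩
  obtain ⟨v1, h01⟩ : ∃ w, G.Adj v0 w := by
    have : 0 < G.degree v0 := by rw [hdeg]; norm_num
    exact (G.degree_pos_iff_exists_adj v0).1 this
  set nxt : V → V → V := fun u v => Classical.epsilon (fun w => G.Adj v w ∧ w ≠ u) with hnxt
  have hnbr2 : ∀ {u v : V}, G.Adj u v → ∃ w, G.Adj v w ∧ w ≠ u := by
    intro u v h
    have hu : u ∈ G.neighborFinset v := by simpa using h.symm
    have hcard : ((G.neighborFinset v).erase u).card = 1 := by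
      rw [Finset.card_erase_of_mem hu]; rw [← degree, hdeg]
    obtain ⟨w, hw⟩ := Finset.card_eq_one.mp hcard
    have : w ∈ (G.neighborFinset v).erase u := hw ▸ Finset.mem_singleton_self w
    simp only [Finset.mem_erase, mem_neighborFinset] at this
    exact ⟨w, this.2, this.1⟩
  have hexn : ∀ {u v : V}, G.Adj u v → G.Adj v (nxt u v) ∧ nxt u v ≠ u := by
    intro u v h
    exact Classical.epsilon_spec (hnbr2 h)
  -- the traversal
  set f : ℕ → V := fun n => (trav nxt v0 v1 n).1 with hfdef
  have hf1 : ∀ n, f (n+1) = (trav nxt v0 v1 n).2 := fun n => rfl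
  have hf2 : ∀ n, f (n+2) = nxt (f n) (f (n+1)) := fun n => rfl
  have hadjf : ∀ n, G.Adj (f n) (f (n+1)) := by
    intro n
    induction n with
    | zero => exact h01
    | succ n ih =>
      rw [hf2 n]
      exact (hexn ih).1
  have hnef : ∀ n, f (n+2) ≠ f n := by
    intro n
    rw [hf2 n]
    exact (hexn (hadjf n)).2
  have hnbrs : ∀ n, G.neighborFinset (f (n+1)) = {f n, f (n+2)} := by
    intro n
    symm
    apply Finset.eq_of_subset_of_card_le
    · intro z hz
      simp only [Finset.mem_insert, Finset.mem_singleton] at hz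
      rcases hz with rfl | rfl
      · simpa using (hadjf n).symm
      · simpa using hadjf (n+1)
    · rw [← degree, hdeg, Finset.card_insert_of_notMem (by simp only [Finset.mem_singleton]; exact fun h => hnef n h.symm), Finset.card_singleton]
  have huniq : ∀ n z, G.Adj (f (n+1)) z → z = f n ∨ z = f (n+2) := by
    intro n z hz
    have hmem : z ∈ G.neighborFinset (f (n+1)) := by simpa using hz
    rw [hnbrs n] at hmem
    simpa using hmem
  have hrep : ∃ m, 0 < m ∧ ∃ j, j < m ∧ f j = f m ∧ f (j+1) = f (m+1) := by
    obtain ⟨i, j, hij, hmap⟩ := Finite.exists_ne_map_eq_of_infinite (fun n => (f n, f (n+1)))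
    rcases Nat.lt_or_ge i j with h | h
    · exact ⟨j, by omega, i, h, congrArg Prod.fst hmap, congrArg Prod.snd hmap⟩
    · have h' : j < i := by omega
      exact ⟨i, by omega, j, h', (congrArg Prod.fst hmap).symm, (congrArg Prod.snd hmap).symm⟩
  set m := Nat.find hrep with hmdef
  obtain ⟨hm0, j, hjm, hj1, hj2⟩ := Nat.find_spec hrep
  rw [← hmdef] at hm0 hjm hj1 hj2
  have hmin : ∀ k, k < m → ¬(0 < k ∧ ∃ j, j < k ∧ f j = f k ∧ f (j+1) = f (k+1)) :=
    fun k hk => Nat.find_min hrep hk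
  have hj0 : j = 0 := by
    by_contra hj0
    have hm2 : 2 ≤ m := by omega
    have e1 : G.neighborFinset (f m) = {f (m-1), f (m+1)} := by
      have := hnbrs (m-1)
      rwa [show m - 1 + 1 = m by omega, show m - 1 + 2 = m + 1 by omega] at this
    have e2 : G.neighborFinset (f j) = {f (j-1), f (j+1)} := by
      have := hnbrs (j-1)
      rwa [show j - 1 + 1 = j by omega, show j - 1 + 2 = j + 1 by omega] at this
    rw [hj1] at e2
    have hmem0 : f (m-1) ∈ G.neighborFinset (f m) := by rw [e1]; simp
    rw [e2] at hmem0
    have hne1 : f (m+1) ≠ f (m-1) := by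
      have := hnef (m-1)
      rwa [show m-1+2 = m+1 by omega] at this
    have hfm1 : f (m-1) = f (j-1) := by
      rcases Finset.mem_insert.mp hmem0 with h | h
      · exact h
      · rw [Finset.mem_singleton] at h
        exact absurd (h.trans hj2) (fun hh => hne1 hh.symm)
    refine hmin (m-1) (by omega) ⟨by omega, j-1, by omega, hfm1.symm, ?_⟩
    rw [show j-1+1 = j by omega, show m-1+1 = m by omega]
    exact hj1
  subst hj0
  have hdarts : ∀ i j, i < j → j < m → ¬(f i = f j ∧ f (i+1) = f (j+1)) := by
    rintro i j hij hjm ⟨h1, h2⟩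
    exact hmin j hjm ⟨by omega, i, hij, h1, h2⟩
  have hper : ∀ k, f (k + m) = f k ∧ f (k + m + 1) = f (k + 1) := by
    intro k
    induction k with
    | zero => exact ⟨by simpa using hj1.symm, by simpa using hj2.symm⟩
    | succ k ih =>
      constructor
      · rw [show k + 1 + m = (k + m) + 1 by omega]
        exact ih.2
      · rw [show k + 1 + m + 1 = (k + m) + 2 by omega, hf2 (k+m), ih.1, ih.2, ← hf2 k]
  have hmodf : ∀ k, f k = f (k % m) := by
    intro k
    have haux : ∀ q r, f (r + q * m) = f r := by
      intro q
      induction q with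
      | zero => simp
      | succ q ih =>
        intro r
        rw [show r + (q+1) * m = (r + q * m) + m by ring, (hper (r + q*m)).1, ih r]
    conv_lhs => rw [← Nat.mod_add_div' k m]
    exact haux (k / m) (k % m)
  have hrev : ∀ d b, ¬ (f (b + d) = f (b + 1) ∧ f (b + d + 1) = f b) := by
    intro d
    induction d using Nat.strong_induction_on with
    | _ d ih =>
      match d, ih with
      | 0, _ =>
        rintro b ⟨h1, h2⟩
        exact (hadjf b).ne (by simpa using h1)
      | 1, _ =>
        rintro b ⟨h1, h2⟩
        exact hnef b (by rw [show b + 1 + 1 = b + 2 by omega] at h2; exact h2)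
      | (d'+2), ih =>
        rintro b ⟨h1, h2⟩
        rw [show b + (d'+2) = b + d' + 2 by omega] at h1
        rw [show b + (d'+2) + 1 = b + d' + 3 by omega] at h2
        have e1 : G.neighborFinset (f (b + d' + 2)) = {f (b + d' + 1), f (b + d' + 3)} := by
          have := hnbrs (b + d' + 1)
          rwa [show b+d'+1+1 = b+d'+2 by omega, show b+d'+1+2 = b+d'+3 by omega] at this
        rw [h1] at e1
        have hmem : f (b + d' + 1) ∈ G.neighborFinset (f (b+1)) := by rw [e1]; simp
        rw [hnbrs b] at hmem
        have hneq : f (b + d' + 1) ≠ f b := by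
          intro hh
          have := hnef (b + d' + 1)
          rw [show b+d'+1+2 = b+d'+3 by omega, h2] at this
          exact this hh.symm
        have hstep : f (b + d' + 1) = f (b + 2) := by
          rcases Finset.mem_insert.mp hmem with h | h
          · exact absurd h hneq
          · simpa using h
        refine ih d' (by omega) (b+1) ⟨?_, ?_⟩
        · rw [show b+1+d' = b+d'+1 by omega]
          exact hstep
        · rw [show b+1+d'+1 = b+d'+2 by omega]
          exact h1
  have hinjcore : ∀ i j, i < j → j < m → f i = f j → False := by
    intro i j hij hjm heq
    have e2 : G.neighborFinset (f j) = {f (j-1), f (j+1)} := by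
      have := hnbrs (j-1)
      rwa [show j - 1 + 1 = j by omega, show j - 1 + 2 = j + 1 by omega] at this
    have hmem : f (i+1) ∈ G.neighborFinset (f j) := by
      rw [mem_neighborFinset, ← heq]
      exact hadjf i
    rw [e2] at hmem
    rcases Finset.mem_insert.mp hmem with h | h
    · refine hrev (j-1-i) i ⟨?_, ?_⟩
      · rw [show i + (j-1-i) = j-1 by omega]
        exact h.symm
      · rw [show i + (j-1-i) + 1 = j by omega]
        exact heq.symm
    · rw [Finset.mem_singleton] at h
      exact hdarts i j hij hjm ⟨heq, h⟩
  have hinj : ∀ i j, i < m → j < m → f i = f j → i = j := by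
    intro i j him hjm heq
    rcases Nat.lt_trichotomy i j with h | h | h
    · exact absurd heq (fun hh => hinjcore i j h hjm hh)
    · exact h
    · exact absurd heq.symm (fun hh => hinjcore j i h him hh)
  have h3m : 3 ≤ m := by
    by_contra hc
    have : m = 1 ∨ m = 2 := by omega
    rcases this with h | h
    · rw [h] at hj1
      exact (hadjf 0).ne hj1
    · rw [h] at hj1
      exact hnef 0 hj1.symm
  have hcl : ∀ (u z : V), (∃ k, f k = u) → G.Adj u z → ∃ k, f k = z := by
    rintro u z ⟨k, hk⟩ hadj
    have e1 : G.neighborFinset (f (k + m)) = {f (k+m-1), f (k+m+1)} := by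
      have := hnbrs (k+m-1)
      rwa [show k+m-1+1 = k+m by omega, show k+m-1+2 = k+m+1 by omega] at this
    have hfk : f (k+m) = u := by rw [(hper k).1, hk]
    have hmem : z ∈ G.neighborFinset (f (k+m)) := by
      rw [mem_neighborFinset, hfk]
      exact hadj
    rw [e1] at hmem
    rcases Finset.mem_insert.mp hmem with h | h
    · exact ⟨k+m-1, h.symm⟩
    · rw [Finset.mem_singleton] at h
      exact ⟨k+m+1, h.symm⟩
  have hwalk : ∀ (a b : V) (p : G.Walk a b), (∃ k, f k = a) → ∃ k, f k = b := by
    intro a b p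
    induction p with
    | nil => exact id
    | cons h q ih => exact fun ha => ih (hcl _ _ ha h)
  have hsur : ∀ u, ∃ k, k < m ∧ f k = u := by
    intro u
    obtain ⟨p⟩ := hconn.preconnected (f 0) u
    obtain ⟨k, hk⟩ := hwalk _ _ p ⟨0, rfl⟩
    exact ⟨k % m, Nat.mod_lt _ (by omega), by rw [← hmodf k, hk]⟩
  haveI : NeZero m := ⟨by omega⟩
  set F : Fin m → V := fun i => f i.val with hFdef
  have hFbij : Function.Bijective F := by
    constructor
    · intro i j hij
      exact Fin.ext (hinj _ _ i.isLt j.isLt hij)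
    · intro u
      obtain ⟨k, hk, he⟩ := hsur u
      exact ⟨⟨k, hk⟩, he⟩
  have hvadd : ∀ i : Fin m, ((i + 1 : Fin m) : ℕ) = (i.val + 1) % m := by
    intro i
    rw [Fin.val_add, Fin.val_one', Nat.mod_eq_of_lt (show 1 < m by omega)]
  have hFsucc : ∀ i : Fin m, F (i + 1) = f (i.val + 1) := by
    intro i
    show f ((i + 1 : Fin m) : ℕ) = f (i.val + 1)
    rw [hvadd i, ← hmodf]
  have hFadj : ∀ i j : Fin m, G.Adj (F i) (F j) ↔ j = i + 1 ∨ i = j + 1 := by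
    intro i j
    constructor
    · intro hadj
      have e1 : G.neighborFinset (f (i.val + m)) = {f (i.val+m-1), f (i.val+m+1)} := by
        have := hnbrs (i.val+m-1)
        rwa [show i.val+m-1+1 = i.val+m by omega, show i.val+m-1+2 = i.val+m+1 by omega] at this
      have hmem : f j.val ∈ G.neighborFinset (f (i.val + m)) := by
        rw [mem_neighborFinset, (hper i.val).1]
        exact hadj
      rw [e1] at hmem
      rcases Finset.mem_insert.mp hmem with h | h
      · right
        have hj' : (i.val+m-1) % m = j.val := by
          apply hinj _ _ (Nat.mod_lt _ (by omega)) j.isLt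
          rw [← hmodf]
          exact h.symm
        apply Fin.ext
        rw [hvadd j, ← hj', Nat.mod_add_mod, show i.val + m - 1 + 1 = i.val + m by omega,
          Nat.add_mod_right, Nat.mod_eq_of_lt i.isLt]
      · left
        rw [Finset.mem_singleton] at h
        have h2 : f j.val = f (i.val + 1) := by
          rw [h, show i.val + m + 1 = (i.val + 1) + m by omega, (hper (i.val+1)).1]
        have hj' : (i.val+1) % m = j.val := by
          apply hinj _ _ (Nat.mod_lt _ (by omega)) j.isLt
          rw [← hmodf]
          exact h2.symm
        apply Fin.ext
        rw [hvadd i, hj']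
    · rintro (rfl | rfl)
      · rw [hFsucc i]
        exact hadjf i.val
      · rw [hFsucc j]
        exact (hadjf j.val).symm
  exact ⟨m, h3m, iso_of_enum G m h3m F hFbij hFadj⟩

theorem stmt10 (V : Type) [Fintype V] (G : SimpleGraph V) (hconn : KEdgeConnected G 2)
    (hmatch : ∃ M : Finset (Sym2 V), IsMatchingFinset G M ∧ 2 ≤ M.card)
    (hsep : ∀ e f : Sym2 V, e ∈ G.edgeSet → f ∈ G.edgeSet → (∀ v, v ∈ e → v ∉ f) →
      ¬ (G.deleteEdges {e, f}).Preconnected) :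
    ∃ n : ℕ, 3 ≤ n ∧ Nonempty (G ≃g cycleGraph n) := by
  classical
  have hGconn : G.Connected := by
    have := hconn ∅ (by norm_num)
    simpa using this
  obtain ⟨M, ⟨hMsub, hMpair⟩, hM2⟩ := hmatch
  obtain ⟨e, heM, f, hfM, hef⟩ := Finset.one_lt_card.mp (by omega : 1 < M.card)
  obtain ⟨p, q, rfl⟩ : ∃ p q, e = s(p,q) := by
    induction e using Sym2.ind with | _ a b => exact ⟨a, b, rfl⟩
  obtain ⟨x, y, rfl⟩ : ∃ x y, f = s(x,y) := by
    induction f using Sym2.ind with | _ a b => exact ⟨a, b, rfl⟩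
  have he : G.Adj p q := (G.mem_edgeSet).mp (hMsub heM)
  have hf : G.Adj x y := (G.mem_edgeSet).mp (hMsub hfM)
  have hd : ∀ z, z ∈ s(p,q) → z ∉ s(x,y) := hMpair heM hfM hef
  have hprecon : ¬ (G.deleteEdges {s(p,q), s(x,y)}).Preconnected :=
    hsep _ _ (hMsub heM) (hMsub hfM) hd
  -- minimum degree ≥ 2
  have hdeg2 : ∀ u, 2 ≤ G.degree u := by
    intro u
    have hz : ∃ z, z ≠ u := by
      by_cases hu : u = p
      · exact ⟨q, fun hh => he.ne (hu ▸ hh).symm⟩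
      · exact ⟨p, fun hh => hu hh.symm⟩
    obtain ⟨z, hzu⟩ := hz
    obtain ⟨pw⟩ := hGconn.preconnected u z
    obtain ⟨w', hadj, -, -⟩ := SimpleGraph.Walk.not_nil_iff.mp
      (SimpleGraph.Walk.not_nil_of_ne (fun hh => hzu hh.symm) (p := pw))
    by_contra hlt
    have hcard1 : G.degree u ≤ 1 := by omega
    have hdel : (G.deleteEdges ↑({s(u,w')} : Finset (Sym2 V))).Connected :=
      hconn {s(u,w')} (by simp)
    rw [Finset.coe_singleton] at hdel
    obtain ⟨pw2⟩ := hdel.preconnected u w'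
    obtain ⟨z2, hadj2, -, -⟩ := SimpleGraph.Walk.not_nil_iff.mp
      (SimpleGraph.Walk.not_nil_of_ne hadj.ne (p := pw2))
    rw [deleteEdges_adj] at hadj2
    have hz2 : z2 = w' :=
      Finset.card_le_one.mp (by exact hcard1) z2 (by simpa using hadj2.1) w' (by simpa using hadj)
    exact hadj2.2 (by rw [hz2]; exact Set.mem_singleton _)
  have hGe : (G.deleteEdges {s(p,q)}).Connected := by
    have := hconn {s(p,q)} (by simp)
    simpa using this
  have hGf : (G.deleteEdges {s(x,y)}).Connected := by
    have := hconn {s(x,y)} (by simp)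
    simpa using this
  have hdel1 : (G.deleteEdges {s(p,q)}).deleteEdges {s(x,y)} = G.deleteEdges {s(p,q), s(x,y)} := by
    rw [deleteEdges_deleteEdges, Set.singleton_union]
  have hdel2 : (G.deleteEdges {s(x,y)}).deleteEdges {s(p,q)} = G.deleteEdges {s(p,q), s(x,y)} := by
    rw [deleteEdges_deleteEdges, Set.singleton_union, Set.pair_comm]
  have hallx : ∀ u, (G.deleteEdges {s(p,q), s(x,y)}).Reachable x u ∨
      (G.deleteEdges {s(p,q), s(x,y)}).Reachable y u := by
    intro u
    have := split' (H := G.deleteEdges {s(p,q)}) (u := x) (w := y) hGe.preconnected u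
    rwa [hdel1] at this
  have hallpq : ∀ u, (G.deleteEdges {s(p,q), s(x,y)}).Reachable p u ∨
      (G.deleteEdges {s(p,q), s(x,y)}).Reachable q u := by
    intro u
    have := split' (H := G.deleteEdges {s(x,y)}) (u := p) (w := q) hGf.preconnected u
    rwa [hdel2] at this
  have hxy : ¬ (G.deleteEdges {s(p,q), s(x,y)}).Reachable x y := by
    intro h
    apply hprecon
    intro a b
    have hxa : ∀ c, (G.deleteEdges {s(p,q), s(x,y)}).Reachable x c := by
      intro c
      rcases hallx c with hc | hc
      · exact hc
      · exact h.trans hc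
    exact (hxa a).symm.trans (hxa b)
  have hsw1 : (s(q,p) : Sym2 V) = s(p,q) := Sym2.eq_swap
  have hsw2 : (s(y,x) : Sym2 V) = s(x,y) := Sym2.eq_swap
  have hdeg : ∀ w, G.degree w = 2 := by
    intro w
    by_contra hne2
    have h3 : 3 ≤ G.degree w := by have := hdeg2 w; omega
    rcases hallpq x with hpx | hqx
    · have hxp : (G.deleteEdges {s(p,q), s(x,y)}).Reachable x p := hpx.symm
      have hyq : (G.deleteEdges {s(p,q), s(x,y)}).Reachable y q := by
        rcases hallpq y with h1 | h1
        · exact absurd (hxp.trans h1) hxy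
        · exact h1.symm
      rcases hallx w with hw | hw
      · exact key' G hsep hdeg2 p q x y w he hf hd hxp hyq hxy hallx hw h3
      · have hd2 : ∀ z, z ∈ s(q,p) → z ∉ s(y,x) := by
          intro z hz hz'
          rw [hsw1] at hz
          rw [hsw2] at hz'
          exact hd z hz hz'
        refine key' G hsep hdeg2 q p y x w he.symm hf.symm hd2 ?_ ?_ ?_ ?_ ?_ h3 <;>
          rw [hsw1, hsw2]
        · exact hyq
        · exact hxp
        · exact fun hh => hxy hh.symm
        · exact fun u => (hallx u).symm
        · exact hw
    · have hxq : (G.deleteEdges {s(p,q), s(x,y)}).Reachable x q := hqx.symm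
      have hyp : (G.deleteEdges {s(p,q), s(x,y)}).Reachable y p := by
        rcases hallpq y with h1 | h1
        · exact h1.symm
        · exact absurd (hxq.trans h1) hxy
      rcases hallx w with hw | hw
      · have hd3 : ∀ z, z ∈ s(q,p) → z ∉ s(x,y) := by
          intro z hz hz'
          rw [hsw1] at hz
          exact hd z hz hz'
        refine key' G hsep hdeg2 q p x y w he.symm hf hd3 ?_ ?_ ?_ ?_ ?_ h3 <;>
          rw [hsw1]
        · exact hxq
        · exact hyp
        · exact hxy
        · exact hallx
        · exact hw
      · have hd4 : ∀ z, z ∈ s(p,q) → z ∉ s(y,x) := by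
          intro z hz hz'
          rw [hsw2] at hz'
          exact hd z hz hz'
        refine key' G hsep hdeg2 p q y x w he hf.symm hd4 ?_ ?_ ?_ ?_ ?_ h3 <;>
          rw [hsw2]
        · exact hyp
        · exact hxq
        · exact fun hh => hxy hh.symm
        · exact fun u => (hallx u).symm
        · exact hw
  exact two_regular_cycle' G hGconn hdeg
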